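/- For any countable abelian group G and any Følner sequence Φ in G with [G:2G] = ℓ < ∞ and |ker(D)| = r < ∞, the doubling ratio satisfies α_Φ ≤ min{1, r/ℓ}. Consequently the group doubling ratio α_G = sup over Følner sequences of α_Φ satisfies α_G ≤ min{1, r/ℓ}. -/

import Mathlib

open Filter Pointwise
open scoped Classical

/-- The doubling map `g ↦ g + g` as an additive homomorphism. -/
def doubleHom (G : Type*) [AddCommGroup G] : G →+ G where
  toFun g := g + g
  map_zero' := by simp
  map_add' := by intro a b; abel

/-- The subgroup `2G = {g + g : g ∈ G}`. -/
def twoG (G : Type*) [AddCommGroup G] : AddSubgroup G := (doubleHom G).range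

/-- A Følner sequence: finite sets with `|Φ_N ∩ (g + Φ_N)|/|Φ_N| → 1` for every `g`. -/
def IsFolner {G : Type*} [AddCommGroup G] (Φ : ℕ → Finset G) : Prop :=
  ∀ g : G, Tendsto
    (fun N => (((Φ N) ∩ (Φ N).image (fun x => g + x)).card : ℝ) / ((Φ N).card : ℝ))
    atTop (nhds 1)

/-- The doubling ratio of a Følner sequence:
`α_Φ = liminf |Φ_N/2 ∩ Φ_N| / |Φ_N|`. -/
noncomputable def dratio {G : Type*} [AddCommGroup G] (Φ : ℕ → Finset G) : ℝ :=
  Filter.liminf (fun N =>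
    (((((fun x : G => x + x) ⁻¹' (Φ N : Set G)) ∩ (Φ N : Set G)).ncard : ℝ) /
      ((Φ N).card : ℝ))) atTop

section Aux

variable {G : Type*} [AddCommGroup G]

lemma folner_pos {Φ : ℕ → Finset G} (hΦ : IsFolner Φ) :
    ∀ᶠ N in atTop, 0 < (Φ N).card := by
  have h := (hΦ 0).eventually (eventually_gt_nhds (show (1:ℝ)/2 < 1 by norm_num))
  filter_upwards [h] with N hN
  by_contra hc
  push_neg at hc
  interval_cases h : (Φ N).card
  · simp [h] at hN; norm_num at hN

lemma folner_err {Φ : ℕ → Finset G} (hΦ : IsFolner Φ) (g : G) {δ : ℝ} (hδ : 0 < δ) :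
    ∀ᶠ N in atTop, ((Φ N).card : ℝ) -
      (((Φ N) ∩ (Φ N).image (fun x => g + x)).card : ℝ) ≤ δ * (Φ N).card := by
  have h := (hΦ g).eventually (eventually_gt_nhds (show 1 - δ < 1 by linarith))
  filter_upwards [h, folner_pos hΦ] with N hN hpos
  have hn : (0:ℝ) < (Φ N).card := by exact_mod_cast hpos
  rw [lt_div_iff₀ hn] at hN
  nlinarith

lemma ratio_nonneg (Φ : ℕ → Finset G) (N : ℕ) :
    0 ≤ (((((fun x : G => x + x) ⁻¹' (Φ N : Set G)) ∩ (Φ N : Set G)).ncard : ℝ) /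
      ((Φ N).card : ℝ)) := by positivity

lemma ratio_le_one (Φ : ℕ → Finset G) (N : ℕ) :
    (((((fun x : G => x + x) ⁻¹' (Φ N : Set G)) ∩ (Φ N : Set G)).ncard : ℝ) /
      ((Φ N).card : ℝ)) ≤ 1 := by
  rcases eq_or_ne ((Φ N).card : ℝ) 0 with h | h
  · rw [h, div_zero]; norm_num
  · rw [div_le_one (lt_of_le_of_ne (by positivity) (Ne.symm h))]
    have : (((fun x : G => x + x) ⁻¹' (Φ N : Set G)) ∩ (Φ N : Set G)).ncard ≤
        ((Φ N : Set G)).ncard :=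
      Set.ncard_le_ncard Set.inter_subset_right (Φ N).finite_toSet
    rw [Set.ncard_coe_finset] at this
    exact_mod_cast this

lemma dratio_le_one {Φ : ℕ → Finset G} : dratio Φ ≤ 1 := by
  unfold dratio
  apply Filter.liminf_le_of_frequently_le
  · exact Filter.Eventually.frequently (Filter.Eventually.of_forall (ratio_le_one Φ))
  · exact isBoundedUnder_of ⟨0, fun N => ratio_nonneg Φ N⟩

lemma dratio_le {ℓ r : ℕ} (hℓ : 0 < ℓ) (hr : 0 < r)
    (hindex : (twoG G).index = ℓ) (hker : Nat.card (doubleHom G).ker = r)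
    {Φ : ℕ → Finset G} (hΦ : IsFolner Φ) :
    dratio Φ ≤ (r : ℝ) / (ℓ : ℝ) := by
  -- setup : finiteness of the quotient and of the kernel
  haveI hQfin : Finite (G ⧸ twoG G) := by
    apply Nat.finite_of_card_ne_zero
    rw [← AddSubgroup.index_eq_card, hindex]; omega
  haveI : Fintype (G ⧸ twoG G) := Fintype.ofFinite _
  have hQcard : Fintype.card (G ⧸ twoG G) = ℓ := by
    rw [← Nat.card_eq_fintype_card, ← AddSubgroup.index_eq_card, hindex]
  haveI hKfin' : Finite (doubleHom G).ker := Nat.finite_of_card_ne_zero (by omega)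
  have hKfin : (((doubleHom G).ker : Set G)).Finite := Set.toFinite _
  set K : Finset G := hKfin.toFinset with hKdef
  have hKcard : K.card = r := by
    rw [← Set.ncard_eq_toFinset_card _ hKfin, ← Nat.card_coe_set_eq]
    simpa using hker
  have hKmem : ∀ x : G, x ∈ K ↔ x + x = 0 := by
    intro x
    rw [hKdef, Set.Finite.mem_toFinset, SetLike.mem_coe, AddMonoidHom.mem_ker]
    rfl
  -- it suffices to prove the bound up to ε
  have main : ∀ ε : ℝ, 0 < ε → dratio Φ ≤ (r : ℝ) / (ℓ : ℝ) + ε := by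
    intro ε hε
    set δ : ℝ := ε / r with hδdef
    have hδ : 0 < δ := by positivity
    -- eventual Følner bound for all coset representatives simultaneously
    have hev : ∀ᶠ N in atTop, ∀ q : G ⧸ twoG G,
        ((Φ N).card : ℝ) -
          (((Φ N) ∩ (Φ N).image (fun x => q.out + x)).card : ℝ) ≤ δ * (Φ N).card :=
      eventually_all.2 fun q => folner_err hΦ q.out hδ
    have key : ∀ᶠ N in atTop,
        (((((fun x : G => x + x) ⁻¹' (Φ N : Set G)) ∩ (Φ N : Set G)).ncard : ℝ) /
          ((Φ N).card : ℝ)) ≤ (r : ℝ) / (ℓ : ℝ) + ε := by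
      filter_upwards [hev, folner_pos hΦ] with N hN hpos
      set A : Finset G := Φ N with hA
      have hn : (0:ℝ) < (A.card : ℝ) := by exact_mod_cast hpos
      set π : G → G ⧸ twoG G := fun x => QuotientAddGroup.mk x with hπ
      set B : Finset G := A.filter (fun x => π x = 0) with hB
      set T : Finset G := A.filter (fun x => x + x ∈ A) with hT
      -- the numerator equals T.card
      have hset : (((fun x : G => x + x) ⁻¹' (A : Set G)) ∩ (A : Set G)) = (T : Set G) := by
        ext x
        simp only [Set.mem_inter_iff, Set.mem_preimage, Finset.coe_filter, Set.mem_setOf_eq,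
          Finset.mem_coe, hT, Finset.mem_filter]
        tauto
      rw [hset, Set.ncard_coe_finset]
      -- Step 1 : T.card ≤ r * B.card
      have step1 : T.card ≤ r * B.card := by
        have h1 : T.card ≤ r * (T.image (fun x => x + x)).card := by
          apply Finset.card_le_mul_card_image
          intro a ha
          obtain ⟨x₀, hx₀T, hx₀⟩ := Finset.mem_image.1 ha
          rw [← hKcard]
          apply Finset.card_le_card_of_injOn (fun x => x - x₀)
          · intro x hx
            rw [Finset.mem_coe, Finset.mem_filter] at hx
            rw [Finset.mem_coe, hKmem]
            have h7 : x + x = x₀ + x₀ := by rw [hx.2, hx₀]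
            calc (x - x₀) + (x - x₀) = (x + x) - (x₀ + x₀) := by abel
              _ = 0 := by rw [h7, sub_self]
          · intro a _ b _ hab
            simpa using sub_left_injective hab
        have h2 : T.image (fun x => x + x) ⊆ B := by
          intro a ha
          obtain ⟨x, hxT, hx⟩ := Finset.mem_image.1 ha
          rw [hT, Finset.mem_filter] at hxT
          rw [hB, Finset.mem_filter]
          refine ⟨by rw [← hx]; exact hxT.2, ?_⟩
          rw [← hx]
          show ((x + x : G) : G ⧸ twoG G) = 0
          rw [QuotientAddGroup.eq_zero_iff]
          exact ⟨x, rfl⟩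
        calc T.card ≤ r * (T.image (fun x => x + x)).card := h1
          _ ≤ r * B.card := Nat.mul_le_mul le_rfl (Finset.card_le_card h2)
      -- Step 2 : per-coset bound
      have step2 : ∀ q : G ⧸ twoG G,
          (B.card : ℝ) ≤ ((A.filter (fun x => (π x = q))).card : ℝ)
            + δ * A.card := by
        intro q
        set g : G := q.out with hg
        set C : Finset G := A.image (fun x => g + x) with hC
        have hCcard : C.card = A.card :=
          Finset.card_image_of_injective _ (add_right_injective g)
        have hBim : (B.image (fun x => g + x)).card = B.card :=
          Finset.card_image_of_injective _ (add_right_injective g)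
        have hsub : B.image (fun x => g + x) ⊆
            (A.filter (fun x => (π x = q))) ∪ (C \ A) := by
          intro y hy
          obtain ⟨x, hxB, rfl⟩ := Finset.mem_image.1 hy
          rw [hB, Finset.mem_filter] at hxB
          by_cases hyA : g + x ∈ A
          · apply Finset.mem_union_left
            rw [Finset.mem_filter]
            refine ⟨hyA, ?_⟩
            have h8 : π (g + x) = π g + π x := rfl
            rw [h8, hxB.2, add_zero, hπ, hg]
            exact Quotient.out_eq' q
          · apply Finset.mem_union_right
            rw [Finset.mem_sdiff]
            exact ⟨Finset.mem_image.2 ⟨x, hxB.1, rfl⟩, hyA⟩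
        have hNat : B.card ≤ (A.filter (fun x => (π x = q))).card
            + (C \ A).card := by
          calc B.card = (B.image (fun x => g + x)).card := hBim.symm
            _ ≤ ((A.filter (fun x => (π x = q))) ∪ (C \ A)).card :=
                Finset.card_le_card hsub
            _ ≤ _ := Finset.card_union_le _ _
        have hsd : ((C \ A).card : ℝ) ≤ δ * A.card := by
          have h3 : (C \ A).card + (C ∩ A).card = C.card :=
            Finset.card_sdiff_add_card_inter C A
          have h4 := hN q
          have h5 : (A ∩ A.image (fun x => q.out + x)) = C ∩ A := by
            rw [hC, hg, Finset.inter_comm]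
          rw [h5] at h4
          have h6 : ((C \ A).card : ℝ) = (A.card : ℝ) - ((C ∩ A).card : ℝ) := by
            have := congrArg (fun n : ℕ => (n : ℝ)) h3
            push_cast at this
            rw [hCcard] at h3
            push_cast [← h3]
            ring
          rw [h6]
          linarith
        calc (B.card : ℝ) ≤ ((A.filter (fun x => (π x = q))).card : ℝ)
              + ((C \ A).card : ℝ) := by exact_mod_cast hNat
          _ ≤ _ := by linarith
      -- Step 3 : summing over cosets
      have hsum : (A.card : ℝ) =
          ∑ q : G ⧸ twoG G, ((A.filter (fun x => (π x = q))).card : ℝ) := by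
        have := Finset.card_eq_sum_card_fiberwise
          (f := π) (s := A) (t := Finset.univ)
          (fun x _ => Finset.mem_univ _)
        exact_mod_cast congrArg (fun n : ℕ => (n : ℝ)) this
      have step3 : (ℓ : ℝ) * B.card ≤ (A.card : ℝ) + (ℓ : ℝ) * (δ * A.card) := by
        have := Finset.sum_le_sum (fun q (_ : q ∈ (Finset.univ : Finset (G ⧸ twoG G))) =>
          step2 q)
        rw [Finset.sum_const, Finset.card_univ, hQcard, nsmul_eq_mul] at this
        have hsum2 : ∑ q : G ⧸ twoG G,
            (((A.filter (fun x => (π x = q))).card : ℝ) + δ * A.card)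
            = (A.card : ℝ) + (ℓ : ℝ) * (δ * A.card) := by
          rw [Finset.sum_add_distrib, ← hsum, Finset.sum_const, Finset.card_univ, hQcard,
            nsmul_eq_mul]
        rw [hsum2] at this
        exact this
      -- conclude
      have hℓR : (0:ℝ) < (ℓ : ℝ) := by exact_mod_cast hℓ
      have hBbound : (B.card : ℝ) ≤ (A.card : ℝ) / ℓ + δ * A.card := by
        rw [div_add' _ _ _ (ne_of_gt hℓR), le_div_iff₀ hℓR]
        nlinarith
      have hTR : (T.card : ℝ) ≤ (r : ℝ) * B.card := by exact_mod_cast step1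
      rw [div_le_iff₀ hn]
      have hrR : (0:ℝ) < (r : ℝ) := by exact_mod_cast hr
      have hδε : (r : ℝ) * δ = ε := by
        rw [hδdef]; field_simp
      calc (T.card : ℝ) ≤ (r : ℝ) * B.card := hTR
        _ ≤ (r : ℝ) * ((A.card : ℝ) / ℓ + δ * A.card) := by nlinarith
        _ = ((r : ℝ) / ℓ + ε) * A.card := by rw [← hδε]; ring
    unfold dratio
    exact Filter.liminf_le_of_frequently_le key.frequently
      (isBoundedUnder_of ⟨0, fun N => ratio_nonneg Φ N⟩)
  by_contra hcon
  push_neg at hcon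
  have := main (((dratio Φ) - (r : ℝ) / (ℓ : ℝ)) / 2) (by linarith)
  linarith

end Aux

theorem stmt12 (G : Type*) [AddCommGroup G] [Countable G] (ℓ r : ℕ)
    (hℓ : 0 < ℓ) (hr : 0 < r)
    (hindex : (twoG G).index = ℓ) (hker : Nat.card (doubleHom G).ker = r) :
    (∀ Φ : ℕ → Finset G, IsFolner Φ → dratio Φ ≤ min 1 ((r : ℝ) / (ℓ : ℝ))) ∧
    sSup {α : ℝ | ∃ Φ : ℕ → Finset G, IsFolner Φ ∧ α = dratio Φ} ≤
      min 1 ((r : ℝ) / (ℓ : ℝ)) := by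
  have h1 : ∀ Φ : ℕ → Finset G, IsFolner Φ → dratio Φ ≤ min 1 ((r : ℝ) / (ℓ : ℝ)) := by
    intro Φ hΦ
    exact le_min dratio_le_one (dratio_le hℓ hr hindex hker hΦ)
  refine ⟨h1, Real.sSup_le ?_ (le_min zero_le_one (by positivity))⟩
  rintro x ⟨Φ, hΦ, rfl⟩
  exact h1 Φ hΦ
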